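/- Let (E, ‖·‖) be an ultrametric Banach space over an ultrametric field K. Then the set Ω := {id − α : α ∈ L(E), ‖α‖ < 1} is an open subgroup of GL(E), and every element of Ω is a surjective linear isometry of E. Consequently the group Iso(E) of surjective linear isometries is an open subgroup of GL(E). -/

import Mathlib

open IsUltrametricDist in
private lemma stmt8_key {K E : Type*} [NontriviallyNormedField K]
    [NormedAddCommGroup E] [NormedSpace K E] [IsUltrametricDist E]
    (α : E →L[K] E) (h : ‖α‖ < 1) (x : E) : ‖(1 - α) x‖ = ‖x‖ := by
  have : (1 - α) x = x + (-(α x)) := by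
    simp [ContinuousLinearMap.sub_apply, sub_eq_add_neg]
  rw [this]
  rcases eq_or_ne x 0 with rfl | hx
  · simp
  · have hlt : ‖α x‖ < ‖x‖ := by
      calc ‖α x‖ ≤ ‖α‖ * ‖x‖ := α.le_opNorm x
      _ < 1 * ‖x‖ := by
        exact mul_lt_mul_of_pos_right h (norm_pos_iff.mpr hx)
      _ = ‖x‖ := one_mul _
    have hne : ‖x‖ ≠ ‖-(α x)‖ := by rw [norm_neg]; exact hlt.ne'
    rw [norm_add_eq_max_of_norm_ne_norm hne, norm_neg, max_eq_left hlt.le]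

/-- Proposition 1.33, ultrametric case: for an ultrametric Banach space `E`,
`Ω = {id − α : ‖α‖ < 1}` consists of surjective linear isometries, is (the carrier of) an
open subgroup of `GL(E)`, and consequently the surjective linear isometries form an open
subgroup of `GL(E)`. -/
theorem stmt8 {K E : Type*} [NontriviallyNormedField K] [CompleteSpace K]
    [IsUltrametricDist K]
    [NormedAddCommGroup E] [NormedSpace K E] [CompleteSpace E] [IsUltrametricDist E] :
    (∀ α : E →L[K] E, ‖α‖ < 1 →
      (∃ u : (E →L[K] E)ˣ, (u : E →L[K] E) = 1 - α) ∧
      Isometry (fun x : E => (1 - α) x)) ∧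
    (∃ G : Subgroup (E →L[K] E)ˣ,
      (G : Set (E →L[K] E)ˣ) =
        {u : (E →L[K] E)ˣ | ∃ α : E →L[K] E, ‖α‖ < 1 ∧ (u : E →L[K] E) = 1 - α} ∧
      IsOpen (G : Set (E →L[K] E)ˣ)) ∧
    (∃ H : Subgroup (E →L[K] E)ˣ,
      (H : Set (E →L[K] E)ˣ) =
        {u : (E →L[K] E)ˣ | Isometry (fun x : E => (u : E →L[K] E) x)} ∧
      IsOpen (H : Set (E →L[K] E)ˣ)) := by
  -- abbreviation: membership in Ω iff ‖1 - u‖ < 1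
  have hmem : ∀ u : (E →L[K] E)ˣ,
      (∃ α : E →L[K] E, ‖α‖ < 1 ∧ (u : E →L[K] E) = 1 - α) ↔
      ‖1 - (u : E →L[K] E)‖ < 1 := by
    intro u
    constructor
    · rintro ⟨α, hα, hu⟩
      rw [hu]; simpa using hα
    · intro h
      exact ⟨1 - (u : E →L[K] E), h, by rw [sub_sub_cancel]⟩
  -- every u with ‖1 - u‖ < 1 is an isometry (pointwise: norm preserving)
  have hnorm : ∀ u : E →L[K] E, ‖1 - u‖ < 1 → ∀ x, ‖u x‖ = ‖x‖ := by
    intro u h x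
    have := stmt8_key (1 - u) h x
    simpa using this
  refine ⟨?_, ?_, ?_⟩
  · intro α hα
    refine ⟨⟨Units.oneSub α hα, rfl⟩, ?_⟩
    exact AddMonoidHomClass.isometry_of_norm (1 - α) (stmt8_key α hα)
  · -- the open subgroup Ω
    refine ⟨{
      carrier := {u | ‖1 - (u : E →L[K] E)‖ < 1}
      one_mem' := by simp
      mul_mem' := by
        rintro u v (hu : ‖1 - (u : E →L[K] E)‖ < 1) (hv : ‖1 - (v : E →L[K] E)‖ < 1)
        show ‖1 - ((u * v : (E →L[K] E)ˣ) : E →L[K] E)‖ < 1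
        have hb : ‖1 - ((u * v : (E →L[K] E)ˣ) : E →L[K] E)‖ ≤
            max ‖1 - (u : E →L[K] E)‖ ‖1 - (v : E →L[K] E)‖ := by
          refine ContinuousLinearMap.opNorm_le_bound _ (le_max_iff.mpr (Or.inl (norm_nonneg _)))
            fun x => ?_
          have heq : (1 - ((u * v : (E →L[K] E)ˣ) : E →L[K] E)) x
              = (1 - (u : E →L[K] E)) x + (u : E →L[K] E) ((1 - (v : E →L[K] E)) x) := by
            simp [ContinuousLinearMap.sub_apply, Units.val_mul, ContinuousLinearMap.mul_apply,
              map_sub]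
          rw [heq]
          calc ‖(1 - (u : E →L[K] E)) x + (u : E →L[K] E) ((1 - (v : E →L[K] E)) x)‖
              ≤ max ‖(1 - (u : E →L[K] E)) x‖ ‖(u : E →L[K] E) ((1 - (v : E →L[K] E)) x)‖ :=
                IsUltrametricDist.norm_add_le_max _ _
            _ = max ‖(1 - (u : E →L[K] E)) x‖ ‖(1 - (v : E →L[K] E)) x‖ := by
                rw [hnorm _ hu]
            _ ≤ max (‖1 - (u : E →L[K] E)‖ * ‖x‖) (‖1 - (v : E →L[K] E)‖ * ‖x‖) :=
                max_le_max (ContinuousLinearMap.le_opNorm _ x)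
                  (ContinuousLinearMap.le_opNorm _ x)
            _ = max ‖1 - (u : E →L[K] E)‖ ‖1 - (v : E →L[K] E)‖ * ‖x‖ := by
                rw [max_mul_of_nonneg _ _ (norm_nonneg x)]
        exact hb.trans_lt (max_lt hu hv)
      inv_mem' := by
        rintro u (hu : ‖1 - (u : E →L[K] E)‖ < 1)
        show ‖1 - ((u⁻¹ : (E →L[K] E)ˣ) : E →L[K] E)‖ < 1
        have hinvnorm : ∀ x, ‖((u⁻¹ : (E →L[K] E)ˣ) : E →L[K] E) x‖ = ‖x‖ := by
          intro x
          have h1 : (u : E →L[K] E) (((u⁻¹ : (E →L[K] E)ˣ) : E →L[K] E) x) = x := by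
            rw [← ContinuousLinearMap.mul_apply, ← Units.val_mul, mul_inv_cancel, Units.val_one,
              ContinuousLinearMap.one_apply]
          conv_rhs => rw [← h1]
          rw [hnorm _ hu]
        have hb : ‖1 - ((u⁻¹ : (E →L[K] E)ˣ) : E →L[K] E)‖ ≤ ‖1 - (u : E →L[K] E)‖ := by
          refine ContinuousLinearMap.opNorm_le_bound _ (norm_nonneg _) fun x => ?_
          have heq : (1 - ((u⁻¹ : (E →L[K] E)ˣ) : E →L[K] E)) x
              = ((u⁻¹ : (E →L[K] E)ˣ) : E →L[K] E) (((u : E →L[K] E) - 1) x) := by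
            simp only [ContinuousLinearMap.sub_apply, map_sub, ContinuousLinearMap.one_apply]
            rw [← ContinuousLinearMap.mul_apply, ← Units.val_mul, inv_mul_cancel, Units.val_one,
              ContinuousLinearMap.one_apply]
          rw [heq, hinvnorm]
          have : ‖((u : E →L[K] E) - 1) x‖ = ‖(1 - (u : E →L[K] E)) x‖ := by
            rw [← norm_neg]; congr 1; simp [ContinuousLinearMap.sub_apply]
          rw [this]
          exact ContinuousLinearMap.le_opNorm _ x
        exact hb.trans_lt hu }, ?_, ?_⟩
    · ext u
      simp only [SetLike.mem_coe, Set.mem_setOf_eq]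
      exact ⟨fun h => (hmem u).mpr h, fun h => (hmem u).mp h⟩
    · show IsOpen {u : (E →L[K] E)ˣ | ‖1 - (u : E →L[K] E)‖ < 1}
      have : {u : (E →L[K] E)ˣ | ‖1 - (u : E →L[K] E)‖ < 1} =
          Units.val ⁻¹' {a : E →L[K] E | ‖1 - a‖ < 1} := rfl
      rw [this]
      exact (isOpen_lt (by continuity) continuous_const).preimage Units.continuous_val
  · -- the subgroup of isometries
    refine ⟨{
      carrier := {u | Isometry (fun x : E => (u : E →L[K] E) x)}
      one_mem' := by
        exact isometry_id (α := E)
      mul_mem' := by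
        rintro u v (hu : Isometry _) (hv : Isometry _)
        show Isometry fun x : E => ((u * v : (E →L[K] E)ˣ) : E →L[K] E) x
        have : (fun x : E => ((u * v : (E →L[K] E)ˣ) : E →L[K] E) x)
            = (fun x : E => (u : E →L[K] E) x) ∘ (fun x : E => (v : E →L[K] E) x) := by
          ext x; simp [Units.val_mul, ContinuousLinearMap.mul_apply]
        rw [this]
        exact hu.comp hv
      inv_mem' := by
        rintro u (hu : Isometry _)
        show Isometry fun x : E => ((u⁻¹ : (E →L[K] E)ˣ) : E →L[K] E) x
        refine AddMonoidHomClass.isometry_of_norm ((u⁻¹ : (E →L[K] E)ˣ) : E →L[K] E) fun x => ?_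
        have h1 : (u : E →L[K] E) (((u⁻¹ : (E →L[K] E)ˣ) : E →L[K] E) x) = x := by
          rw [← ContinuousLinearMap.mul_apply, ← Units.val_mul, mul_inv_cancel, Units.val_one,
            ContinuousLinearMap.one_apply]
        have hn : ∀ y, ‖(u : E →L[K] E) y‖ = ‖y‖ := fun y =>
          hu.norm_map_of_map_zero (by simp) y
        conv_rhs => rw [← h1, hn]
      }, rfl, ?_⟩
    · -- openness: contains the open set Ω which is a neighborhood of 1
      refine Subgroup.isOpen_of_mem_nhds (g := 1) _ ?_
      have hopen : IsOpen {u : (E →L[K] E)ˣ | ‖1 - (u : E →L[K] E)‖ < 1} := by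
        have : {u : (E →L[K] E)ˣ | ‖1 - (u : E →L[K] E)‖ < 1} =
            Units.val ⁻¹' {a : E →L[K] E | ‖1 - a‖ < 1} := rfl
        rw [this]
        exact (isOpen_lt (by continuity) continuous_const).preimage Units.continuous_val
      refine Filter.mem_of_superset (hopen.mem_nhds (by simp)) ?_
      intro u hu
      show Isometry fun x : E => (u : E →L[K] E) x
      exact AddMonoidHomClass.isometry_of_norm (u : E →L[K] E) (hnorm _ hu)
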